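/- Define Ψ : c_0 × ℝ → c by Ψ(x, t) = (x_1 + t, x_2 + t, ...), and let μ be the pushforward under Ψ of μ_0 × ν, where μ_0 is a fully supported non-aligned measure on c_0 and ν is the standard normal law on ℝ. Then μ is fully supported on c: for every open ball U = B(x, r) in c, μ(U) > 0. -/

import Mathlib

open Filter Topology MeasureTheory ProbabilityTheory ENNReal NNReal

/-- The map `Ψ : c₀ × ℝ → c`, `Ψ(x, t) = (x₁ + t, x₂ + t, …)`. -/
def Psi (p : (ℕ → ℝ) × ℝ) : ℕ → ℝ := fun n => p.1 n + p.2

lemma psi_measurable : Measurable Psi := by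
  apply measurable_pi_lambda
  exact fun n => ((measurable_pi_apply n).comp measurable_fst).add measurable_snd

lemma gaussian_Ioo_pos (a b : ℝ) (h : a < b) : 0 < gaussianReal 0 1 (Set.Ioo a b) := by
  rw [gaussianReal_apply 0 one_ne_zero]
  refine (setLIntegral_pos_iff (measurable_gaussianPDF 0 1)).2 ?_
  have hsub : Set.Ioo a b ⊆ Function.support (gaussianPDF 0 1) := by
      intro y _
      simp only [Function.mem_support, gaussianPDF]
      exact (ENNReal.ofReal_pos.2 (gaussianPDFReal_pos 0 1 y one_ne_zero)).ne'
  calc (0 : ℝ≥0∞) < volume (Set.Ioo a b) := by simp [h]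
    _ ≤ volume (Function.support (gaussianPDF 0 1) ∩ Set.Ioo a b) := by
        rw [Set.inter_eq_right.2 hsub]

/-- pushing forward `μ₀ × ν` (with `μ₀` fully supported and non-aligned on
`c₀` and `ν` the standard normal law) under `Ψ` yields a measure fully supported on `c`:
every open sup-norm ball in `c` has positive measure. -/
theorem pushforward_fully_supported_on_c
    (μ₀ : Measure (ℕ → ℝ)) [IsProbabilityMeasure μ₀]
    (hμ₀c0 : μ₀ {x | Tendsto x atTop (nhds 0)} = 1)
    (hfull : ∀ y : ℕ → ℝ, Tendsto y atTop (nhds 0) → ∀ r : ℝ, 0 < r →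
      0 < μ₀ {z | Tendsto z atTop (nhds 0) ∧ ∃ s : ℝ, s < r ∧ ∀ n, |z n - y n| ≤ s})
    (hnonaligned : ∀ (j : ℕ) (α : ℝ), μ₀ {x | x j = α} = 0)
    (μ : Measure (ℕ → ℝ))
    (hμ : μ = Measure.map Psi (μ₀.prod (gaussianReal 0 1)))
    (x : ℕ → ℝ) (hx : ∃ a : ℝ, Tendsto x atTop (nhds a)) (r : ℝ) (hr : 0 < r) :
    0 < μ {z | ∃ s : ℝ, s < r ∧ ∀ n, |z n - x n| ≤ s} := by
  obtain ⟨a, ha⟩ := hx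
  set S : Set (ℕ → ℝ) := {z | ∃ s : ℝ, s < r ∧ ∀ n, |z n - x n| ≤ s} with hSdef
  have hS : MeasurableSet S := by
    have : S = ⋃ (q : ℚ), {z : ℕ → ℝ | (q : ℝ) < r ∧ ∀ n, |z n - x n| ≤ (q : ℝ)} := by
      ext z
      simp only [hSdef, Set.mem_setOf_eq, Set.mem_iUnion]
      constructor
      · rintro ⟨s, hs, h⟩
        obtain ⟨q, hq1, hq2⟩ := exists_rat_btwn hs
        exact ⟨q, hq2, fun n => (h n).trans hq1.le⟩
      · rintro ⟨q, hq, h⟩; exact ⟨q, hq, h⟩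
    rw [this]
    have hmeas : ∀ q : ℚ,
        MeasurableSet {z : ℕ → ℝ | (q : ℝ) < r ∧ ∀ n, |z n - x n| ≤ (q : ℝ)} := by
      intro q
      by_cases hq : (q : ℝ) < r
      · simp only [hq, true_and, Set.setOf_forall]
        exact MeasurableSet.iInter fun n =>
          measurableSet_le (((measurable_pi_apply n).sub measurable_const).abs) measurable_const
      · simp only [hq, false_and, Set.setOf_false, MeasurableSet.empty]
    exact MeasurableSet.iUnion hmeas
  rw [hμ, Measure.map_apply psi_measurable hS]
  set y : ℕ → ℝ := fun n => x n - a with hydef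
  have hy : Tendsto y atTop (nhds 0) := by
    have := ha.sub (tendsto_const_nhds (x := a))
    simpa using this
  set A : Set (ℕ → ℝ) :=
    {z | Tendsto z atTop (nhds 0) ∧ ∃ s : ℝ, s < r / 4 ∧ ∀ n, |z n - y n| ≤ s} with hAdef
  have hsub : A ×ˢ Set.Ioo (a - r / 4) (a + r / 4) ⊆ Psi ⁻¹' S := by
    rintro ⟨z, t⟩ ⟨⟨_, s, hs, hzs⟩, ht⟩
    refine ⟨s + r / 4, by linarith, fun n => ?_⟩
    have h1 : |z n - y n| ≤ s := hzs n
    have h2 : |t - a| < r / 4 := by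
      rw [abs_sub_lt_iff]; constructor <;> [linarith [ht.2]; linarith [ht.1]]
    have : Psi (z, t) n - x n = (z n - y n) + (t - a) := by
      simp [Psi, hydef]; ring
    rw [this]
    calc |(z n - y n) + (t - a)| ≤ |z n - y n| + |t - a| := abs_add_le _ _
      _ ≤ s + r / 4 := by linarith
  calc (0 : ℝ≥0∞) < μ₀ A * gaussianReal 0 1 (Set.Ioo (a - r / 4) (a + r / 4)) := by
        refine ENNReal.mul_pos ?_ ?_
        · exact (hfull y hy (r / 4) (by linarith)).ne'
        · exact (gaussian_Ioo_pos _ _ (by linarith)).ne'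
    _ = (μ₀.prod (gaussianReal 0 1)) (A ×ˢ Set.Ioo (a - r / 4) (a + r / 4)) :=
        (Measure.prod_prod _ _).symm
    _ ≤ (μ₀.prod (gaussianReal 0 1)) (Psi ⁻¹' S) := measure_mono hsub
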